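/- Let n > 3 and let S and T be finite multisets of permutations of {1,…,n} of the same cardinality such that the sums of the permutation matrices of the elements of S and of T are equal. Then there is a finite sequence S = S_0, S_1, …, S_m = T of multisets of permutations, each with the same sum of permutation matrices, such that for each i the multiset differences S_i \ S_{i+1} and S_{i+1} \ S_i each have cardinality at most n−1. -/

import Mathlib

/-- The permutation matrix of `π`: entry `(i,j)` is `1` if `π i = j`, else `0`. -/
def permMat (n : ℕ) (π : Equiv.Perm (Fin n)) : Matrix (Fin n) (Fin n) ℕ :=
  Matrix.of fun i j => if π i = j then 1 else 0

namespace PermMoves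

open Finset Equiv

variable {n : ℕ}

lemma permMat_apply (π : Equiv.Perm (Fin n)) (i j : Fin n) :
    permMat n π i j = if π i = j then 1 else 0 := rfl

lemma sumPM_apply (S : Multiset (Equiv.Perm (Fin n))) (i j : Fin n) :
    (S.map (permMat n)).sum i j = (S.map fun σ => permMat n σ i j).sum := by
  induction S using Multiset.induction_on with
  | empty => simp [Matrix.zero_apply]
  | cons a s ih => simp [Matrix.add_apply, ih]

lemma entry_pos_iff (S : Multiset (Equiv.Perm (Fin n))) (i j : Fin n) :
    0 < (S.map (permMat n)).sum i j ↔ ∃ σ ∈ S, σ i = j := by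
  rw [sumPM_apply]
  induction S using Multiset.induction_on with
  | empty => simp
  | cons a s ih =>
    simp only [Multiset.map_cons, Multiset.sum_cons, Multiset.mem_cons]
    rw [add_pos_iff, ih]
    constructor
    · rintro (h | ⟨σ, hσ, rfl⟩)
      · exact ⟨a, Or.inl rfl, by by_contra hc; simp [permMat_apply, hc] at h⟩
      · exact ⟨σ, Or.inr hσ, rfl⟩
    · rintro ⟨σ, (rfl | hσ), h⟩
      · exact Or.inl (by simp [permMat_apply, h])
      · exact Or.inr ⟨σ, hσ, h⟩

lemma row_sum_permMat (σ : Equiv.Perm (Fin n)) (i : Fin n) :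
    ∑ j, permMat n σ i j = 1 := by
  simp [permMat_apply]

lemma col_sum_permMat (σ : Equiv.Perm (Fin n)) (j : Fin n) :
    ∑ i, permMat n σ i j = 1 := by
  have : ∀ i : Fin n, (if σ i = j then (1:ℕ) else 0) = if i = σ⁻¹ j then 1 else 0 := by
    intro i
    congr 1
    simp [Equiv.Perm.eq_inv_iff_eq, eq_comm]
    exact ⟨fun h => by rw [h, Equiv.symm_apply_apply], fun h => by rw [h, Equiv.apply_symm_apply]⟩
  simp only [permMat_apply, this]
  simp


lemma row_sum_sumPM (S : Multiset (Equiv.Perm (Fin n))) (i : Fin n) :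
    ∑ j, (S.map (permMat n)).sum i j = Multiset.card S := by
  induction S using Multiset.induction_on with
  | empty => simp [Matrix.zero_apply]
  | cons a s ih =>
    simp [Matrix.add_apply, Finset.sum_add_distrib, ih, row_sum_permMat, add_comm]

lemma col_sum_sumPM (S : Multiset (Equiv.Perm (Fin n))) (j : Fin n) :
    ∑ i, (S.map (permMat n)).sum i j = Multiset.card S := by
  induction S using Multiset.induction_on with
  | empty => simp [Matrix.zero_apply]
  | cons a s ih =>
    simp [Matrix.add_apply, Finset.sum_add_distrib, ih, col_sum_permMat, add_comm]

/-- Hall-based extraction of a permutation from a doubly `k`-regular ℕ-matrix. -/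
lemma exists_perm_pos (M : Matrix (Fin n) (Fin n) ℕ) (k : ℕ) (hk : 0 < k)
    (hrow : ∀ i, ∑ j, M i j = k) (hcol : ∀ j, ∑ i, M i j = k) :
    ∃ a : Equiv.Perm (Fin n), ∀ i, 0 < M i (a i) := by
  classical
  set t : Fin n → Finset (Fin n) := fun i => univ.filter (fun j => 0 < M i j) with ht
  have hall : ∀ s : Finset (Fin n), s.card ≤ (s.biUnion t).card := by
    intro s
    have h1 : k * s.card = ∑ i ∈ s, ∑ j, M i j := by
      rw [Finset.sum_congr rfl fun i _ => hrow i]; simp [mul_comm]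
    have h2 : ∑ i ∈ s, ∑ j, M i j = ∑ j, ∑ i ∈ s, M i j := Finset.sum_comm
    have h3 : ∑ j, ∑ i ∈ s, M i j = ∑ j ∈ s.biUnion t, ∑ i ∈ s, M i j := by
      symm
      apply Finset.sum_subset (Finset.subset_univ _)
      intro j _ hj
      apply Finset.sum_eq_zero
      intro i hi
      by_contra hM
      exact hj (Finset.mem_biUnion.mpr ⟨i, hi, Finset.mem_filter.mpr ⟨Finset.mem_univ _, Nat.pos_of_ne_zero hM⟩⟩)
    have h4 : ∑ j ∈ s.biUnion t, ∑ i ∈ s, M i j ≤ ∑ j ∈ s.biUnion t, k := by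
      apply Finset.sum_le_sum
      intro j _
      rw [← hcol j]
      exact Finset.sum_le_sum_of_subset (Finset.subset_univ s)
    have : k * s.card ≤ k * (s.biUnion t).card := by
      calc k * s.card = ∑ j ∈ s.biUnion t, ∑ i ∈ s, M i j := by rw [h1, h2, h3]
      _ ≤ ∑ j ∈ s.biUnion t, k := h4
      _ = (s.biUnion t).card * k := by rw [Finset.sum_const, smul_eq_mul]
      _ = k * (s.biUnion t).card := mul_comm _ _
    exact Nat.le_of_mul_le_mul_left this hk
  obtain ⟨f, hfinj, hf⟩ := (Finset.all_card_le_biUnion_card_iff_exists_injective t).mp hall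
  refine ⟨Equiv.ofBijective f ((Finite.injective_iff_bijective).mp hfinj), fun i => ?_⟩
  have := hf i
  rw [ht] at this
  simpa using (Finset.mem_filter.mp this).2

/-- Birkhoff-von Neumann decomposition for ℕ-matrices with equal line sums. -/
lemma exists_decomp : ∀ (k : ℕ) (M : Matrix (Fin n) (Fin n) ℕ),
    (∀ i, ∑ j, M i j = k) → (∀ j, ∑ i, M i j = k) →
    ∃ B : Multiset (Equiv.Perm (Fin n)), Multiset.card B = k ∧ (B.map (permMat n)).sum = M := by
  intro k
  induction k with
  | zero =>
    intro M hrow hcol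
    refine ⟨0, rfl, ?_⟩
    ext i j
    have := hrow i
    rw [Finset.sum_eq_zero_iff] at this
    simp [Matrix.zero_apply, this j (Finset.mem_univ j)]
  | succ k ih =>
    intro M hrow hcol
    obtain ⟨a, ha⟩ := exists_perm_pos M (k+1) (Nat.succ_pos k) hrow hcol
    set M' : Matrix (Fin n) (Fin n) ℕ := Matrix.of fun i j => M i j - permMat n a i j with hM'
    have hkey : ∀ i j, permMat n a i j + M' i j = M i j := by
      intro i j
      simp only [hM', Matrix.of_apply, permMat_apply]
      by_cases h : a i = j
      · subst h
        have h2 := ha i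
        simp only [permMat_apply, if_pos rfl] at h2 ⊢
        simp only [if_true]
        omega
      · simp [h]
    have hrow' : ∀ i, ∑ j, M' i j = k := by
      intro i
      have h1 : ∑ j, (permMat n a i j + M' i j) = k + 1 := by
        rw [Finset.sum_congr rfl fun j _ => hkey i j]; exact hrow i
      rw [Finset.sum_add_distrib, row_sum_permMat] at h1
      omega
    have hcol' : ∀ j, ∑ i, M' i j = k := by
      intro j
      have h1 : ∑ i, (permMat n a i j + M' i j) = k + 1 := by
        rw [Finset.sum_congr rfl fun i _ => hkey i j]; exact hcol j
      rw [Finset.sum_add_distrib, col_sum_permMat] at h1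
      omega
    obtain ⟨B, hBcard, hBsum⟩ := ih M' hrow' hcol'
    refine ⟨a ::ₘ B, by simp [hBcard], ?_⟩
    rw [Multiset.map_cons, Multiset.sum_cons, hBsum]
    ext i j
    rw [Matrix.add_apply]
    exact hkey i j


/-- If there is no "closed set" obstruction, we can find a permutation `a` dominated by the
supports of the `σ l` (`l ≠ z`) fixing both `p` and `q`. -/
lemma exists_perm_two_fixed (σ : Fin n → Equiv.Perm (Fin n)) (z p q : Fin n)
    (hpz : p ≠ z) (hqz : q ≠ z) (hpq : p ≠ q)
    (hfix : ∀ l, σ l l = l)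
    (hnoR : ¬ ∃ R : Finset (Fin n), z ∈ R ∧ p ∉ R ∧ q ∉ R ∧
      ∀ i ∈ R, ∀ l, l ≠ z → σ l i ≠ z ∧ (σ l i ∈ R ∨ σ l i = p ∨ σ l i = q)) :
    ∃ a : Equiv.Perm (Fin n), a p = p ∧ a q = q ∧ ∀ i, ∃ l, l ≠ z ∧ σ l i = a i := by
  classical
  set t : Fin n → Finset (Fin n) := fun i =>
    if i = p then {p} else if i = q then {q}
    else ((univ.erase z).image (fun l => σ l i)) \ {p, q} with ht
  have hall : ∀ s : Finset (Fin n), s.card ≤ (s.biUnion t).card := by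
    intro s
    set R : Finset (Fin n) := (s.erase p).erase q with hR
    have hpR : p ∉ R := fun h => (Finset.mem_erase.mp (Finset.mem_of_mem_erase h)).1 rfl
    have hqR : q ∉ R := fun h => (Finset.mem_erase.mp h).1 rfl
    set N : Finset (Fin n) := R.biUnion t with hN
    have htR : ∀ i ∈ R, t i = ((univ.erase z).image (fun l => σ l i)) \ {p, q} := by
      intro i hi
      have hip : i ≠ p := fun h => hpR (h ▸ hi)
      have hiq : i ≠ q := fun h => hqR (h ▸ hi)
      simp [ht, hip, hiq]
    have hpN : p ∉ N := by
      intro h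
      obtain ⟨i, hi, hmem⟩ := Finset.mem_biUnion.mp h
      rw [htR i hi] at hmem
      exact (Finset.mem_sdiff.mp hmem).2 (by simp)
    have hqN : q ∉ N := by
      intro h
      obtain ⟨i, hi, hmem⟩ := Finset.mem_biUnion.mp h
      rw [htR i hi] at hmem
      exact (Finset.mem_sdiff.mp hmem).2 (by simp)
    have hsubN : R.erase z ⊆ N := by
      intro i hi
      obtain ⟨hiz, hiR⟩ := Finset.mem_erase.mp hi
      apply Finset.mem_biUnion.mpr ⟨i, hiR, ?_⟩
      rw [htR i hiR]
      refine Finset.mem_sdiff.mpr ⟨?_, ?_⟩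
      · exact Finset.mem_image.mpr ⟨i, Finset.mem_erase.mpr ⟨hiz, Finset.mem_univ i⟩, hfix i⟩
      · have hip : i ≠ p := fun h => hpR (h ▸ hiR)
        have hiq : i ≠ q := fun h => hqR (h ▸ hiR)
        simp [hip, hiq]
    have hcardRN : R.card ≤ N.card := by
      by_cases hzR : z ∈ R
      · by_cases hNs : N ⊆ R.erase z
        · exfalso
          apply hnoR
          refine ⟨R, hzR, hpR, hqR, fun i hi l hl => ?_⟩
          by_cases hpqc : σ l i = p ∨ σ l i = q
          · constructor
            · rcases hpqc with h | h <;> rw [h]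
              · exact fun hc => hpz hc
              · exact fun hc => hqz hc
            · exact Or.inr hpqc
          · push_neg at hpqc
            have hmem : σ l i ∈ t i := by
              rw [htR i hi]
              refine Finset.mem_sdiff.mpr ⟨Finset.mem_image.mpr ⟨l, Finset.mem_erase.mpr ⟨hl, Finset.mem_univ l⟩, rfl⟩, ?_⟩
              simp [hpqc.1, hpqc.2]
            have hN' : σ l i ∈ N := Finset.mem_biUnion.mpr ⟨i, hi, hmem⟩
            have := hNs hN'
            exact ⟨(Finset.mem_erase.mp this).1, Or.inl (Finset.mem_of_mem_erase this)⟩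
        · obtain ⟨y, hyN, hyR⟩ := Finset.not_subset.mp hNs
          have : insert y (R.erase z) ⊆ N := by
            intro x hx
            rcases Finset.mem_insert.mp hx with rfl | hx
            · exact hyN
            · exact hsubN hx
          calc R.card = (R.erase z).card + 1 := by
                rw [Finset.card_erase_of_mem hzR]
                have := Finset.card_pos.mpr ⟨z, hzR⟩
                omega
          _ = (insert y (R.erase z)).card := (Finset.card_insert_of_notMem hyR).symm
          _ ≤ N.card := Finset.card_le_card this
      · have : R ⊆ N := by
          intro x hx
          exact hsubN (Finset.mem_erase.mpr ⟨fun h => hzR (h ▸ hx), hx⟩)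
        exact Finset.card_le_card this
    -- now conclude for s
    have hsub_s : s ⊆ insert p (insert q R) := by
      intro x hx
      by_cases hxp : x = p
      · simp [hxp]
      by_cases hxq : x = q
      · simp [hxq]
      · exact Finset.mem_insert.mpr (Or.inr (Finset.mem_insert.mpr (Or.inr
          (Finset.mem_erase.mpr ⟨hxq, Finset.mem_erase.mpr ⟨hxp, hx⟩⟩))))
    have hNsub : N ⊆ s.biUnion t := by
      intro x hx
      obtain ⟨i, hi, hmem⟩ := Finset.mem_biUnion.mp hx
      exact Finset.mem_biUnion.mpr ⟨i, Finset.mem_of_mem_erase (Finset.mem_of_mem_erase hi), hmem⟩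
    by_cases hps : p ∈ s <;> by_cases hqs : q ∈ s
    · have h1 : insert p (insert q N) ⊆ s.biUnion t := by
        intro x hx
        rcases Finset.mem_insert.mp hx with rfl | hx
        · exact Finset.mem_biUnion.mpr ⟨x, hps, by simp [ht]⟩
        rcases Finset.mem_insert.mp hx with rfl | hx
        · exact Finset.mem_biUnion.mpr ⟨x, hqs, by simp [ht, hpq.symm]⟩
        · exact hNsub hx
      have h2 : (insert p (insert q N)).card = N.card + 2 := by
        rw [Finset.card_insert_of_notMem (by simp [hpN, hpq]),
            Finset.card_insert_of_notMem hqN]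
      calc s.card ≤ (insert p (insert q R)).card := Finset.card_le_card hsub_s
      _ ≤ R.card + 2 := by
          refine le_trans (Finset.card_insert_le _ _) ?_
          have := Finset.card_insert_le q R
          omega
      _ ≤ N.card + 2 := by omega
      _ = (insert p (insert q N)).card := h2.symm
      _ ≤ (s.biUnion t).card := Finset.card_le_card h1
    · have hs_sub : s ⊆ insert p R := by
        intro x hx
        rcases Finset.mem_insert.mp (hsub_s hx) with rfl | h
        · simp
        rcases Finset.mem_insert.mp h with rfl | h
        · exact absurd hx hqs
        · exact Finset.mem_insert.mpr (Or.inr h)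
      have h1 : insert p N ⊆ s.biUnion t := by
        intro x hx
        rcases Finset.mem_insert.mp hx with rfl | hx
        · exact Finset.mem_biUnion.mpr ⟨x, hps, by simp [ht]⟩
        · exact hNsub hx
      calc s.card ≤ (insert p R).card := Finset.card_le_card hs_sub
      _ ≤ R.card + 1 := Finset.card_insert_le _ _
      _ ≤ N.card + 1 := by omega
      _ = (insert p N).card := (Finset.card_insert_of_notMem hpN).symm
      _ ≤ (s.biUnion t).card := Finset.card_le_card h1
    · have hs_sub : s ⊆ insert q R := by
        intro x hx
        rcases Finset.mem_insert.mp (hsub_s hx) with rfl | h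
        · exact absurd hx hps
        · exact h
      have h1 : insert q N ⊆ s.biUnion t := by
        intro x hx
        rcases Finset.mem_insert.mp hx with rfl | hx
        · exact Finset.mem_biUnion.mpr ⟨x, hqs, by simp [ht, hpq.symm]⟩
        · exact hNsub hx
      calc s.card ≤ (insert q R).card := Finset.card_le_card hs_sub
      _ ≤ R.card + 1 := Finset.card_insert_le _ _
      _ ≤ N.card + 1 := by omega
      _ = (insert q N).card := (Finset.card_insert_of_notMem hqN).symm
      _ ≤ (s.biUnion t).card := Finset.card_le_card h1
    · have hs_sub : s ⊆ R := by
        intro x hx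
        rcases Finset.mem_insert.mp (hsub_s hx) with rfl | h
        · exact absurd hx hps
        rcases Finset.mem_insert.mp h with rfl | h
        · exact absurd hx hqs
        · exact h
      calc s.card ≤ R.card := Finset.card_le_card hs_sub
      _ ≤ N.card := hcardRN
      _ ≤ (s.biUnion t).card := Finset.card_le_card hNsub
  obtain ⟨f, hfinj, hf⟩ := (Finset.all_card_le_biUnion_card_iff_exists_injective t).mp hall
  have hfp : f p = p := by
    have := hf p
    simp only [ht, if_pos rfl] at this
    exact Finset.mem_singleton.mp this
  have hfq : f q = q := by
    have := hf q
    simp only [ht, if_neg hpq.symm, if_pos rfl] at this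
    exact Finset.mem_singleton.mp this
  refine ⟨Equiv.ofBijective f ((Finite.injective_iff_bijective).mp hfinj), hfp, hfq, fun i => ?_⟩
  show ∃ l, l ≠ z ∧ σ l i = f i
  by_cases hip : i = p
  · subst hip
    exact ⟨i, fun h => hpz h, by rw [hfix i, hfp]⟩
  by_cases hiq : i = q
  · subst hiq
    exact ⟨i, fun h => hqz h, by rw [hfix i, hfq]⟩
  · have := hf i
    simp only [ht, if_neg hip, if_neg hiq] at this
    obtain ⟨l, hl, hli⟩ := Finset.mem_image.mp (Finset.mem_sdiff.mp this).1
    exact ⟨l, (Finset.mem_erase.mp hl).1, hli⟩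


lemma bad_case_core (hn : 4 ≤ n) (σ : Fin n → Equiv.Perm (Fin n)) (z : Fin n)
    (hfix : ∀ l, σ l l = l) (hexact : ∀ l x, σ l x = x → x = l) :
    ∃ a : Equiv.Perm (Fin n), (∃ p q, p ≠ q ∧ a p = p ∧ a q = q) ∧
      ∀ i, ∃ l, l ≠ z ∧ σ l i = a i := by
  classical
  have huz : ∀ l, l ≠ z → σ l z ≠ z := by
    intro l hl h
    exact hl (hexact l z h).symm
  have hul_ne : ∀ l, l ≠ z → σ l z ≠ l := by
    intro l hl h
    have h2 : z = l := (σ l).injective (h.trans (hfix l).symm)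
    exact hl h2.symm
  by_cases hcase1 : ∃ l, l ≠ z ∧ ∃ r, r ≠ z ∧ r ≠ l ∧ ∀ j : ℕ, ((σ l)^j) z ≠ r
  · obtain ⟨l, hlz, r, hrz, hrl, horb⟩ := hcase1
    have hnoR : ¬ ∃ R : Finset (Fin n), z ∈ R ∧ l ∉ R ∧ r ∉ R ∧
        ∀ i ∈ R, ∀ m, m ≠ z → σ m i ≠ z ∧ (σ m i ∈ R ∨ σ m i = l ∨ σ m i = r) := by
      rintro ⟨R, hzR, hpR, hqR, hcl⟩
      have key : ∀ j : ℕ, ((σ l)^j) z ∈ R := by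
        intro j
        induction j with
        | zero => simpa using hzR
        | succ j ih =>
          have h := hcl _ ih l hlz
          have hstep : ((σ l)^(j+1)) z = σ l (((σ l)^j) z) := by
            rw [pow_succ']; rfl
          rcases h.2 with h' | h' | h'
          · rw [hstep]; exact h'
          · exfalso
            have : ((σ l)^j) z = l := (σ l).injective (h'.trans (hfix l).symm)
            rw [this] at ih
            exact hpR ih
          · exact absurd (hstep.trans h') (horb (j+1))
      have hpos : 0 < orderOf (σ l) := orderOf_pos _
      have h := hcl _ (key (orderOf (σ l) - 1)) l hlz
      apply h.1
      have hstep : σ l (((σ l)^(orderOf (σ l) - 1)) z) = ((σ l)^(orderOf (σ l))) z := by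
        rw [← Equiv.Perm.mul_apply, ← pow_succ']
        congr 2
        omega
      rw [hstep, pow_orderOf_eq_one]
      rfl
    obtain ⟨a, hap, haq, ha⟩ := exists_perm_two_fixed σ z l r hlz hrz (Ne.symm hrl) hfix hnoR
    exact ⟨a, ⟨l, r, Ne.symm hrl, hap, haq⟩, ha⟩
  · push_neg at hcase1
    have horb : ∀ l, l ≠ z → ∀ r, r ≠ z → r ≠ l → ∃ j : ℕ, ((σ l)^j) z = r := by
      intro l hl r hr hrl
      obtain ⟨j, hj⟩ := hcase1 l hl r hr hrl
      exact ⟨j, not_not.mp (by simpa using hj)⟩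
    by_cases hcase2a : ∃ l m, l ≠ z ∧ m ≠ z ∧ σ m z ≠ σ l z ∧ σ m z ≠ l
    · obtain ⟨l, m, hlz, hmz, hne1, hne2⟩ := hcase2a
      have huql : σ l z ≠ z := huz l hlz
      have hlul : l ≠ σ l z := Ne.symm (hul_ne l hlz)
      have hnoR : ¬ ∃ R : Finset (Fin n), z ∈ R ∧ l ∉ R ∧ (σ l z) ∉ R ∧
          ∀ i ∈ R, ∀ m', m' ≠ z → σ m' i ≠ z ∧ (σ m' i ∈ R ∨ σ m' i = l ∨ σ m' i = σ l z) := by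
        rintro ⟨R, hzR, hpR, hqR, hcl⟩
        have humR : σ m z ∈ R := by
          have h := hcl z hzR m hmz
          rcases h.2 with h' | h' | h'
          · exact h'
          · exact absurd h' hne2
          · exact absurd h' hne1
        have humz : σ m z ≠ z := huz m hmz
        obtain ⟨tt, htt⟩ := horb l hlz (σ m z) humz hne2
        have hex : ∃ s : ℕ, 1 ≤ s ∧ ((σ l)^s) (σ m z) = z := by
          refine ⟨orderOf (σ l) * (tt+1) - tt, ?_, ?_⟩
          · have h1 : tt + 1 ≤ orderOf (σ l) * (tt+1) :=
              Nat.le_mul_of_pos_left _ (orderOf_pos _)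
            omega
          · have h1 : tt ≤ orderOf (σ l) * (tt+1) := by
              have := Nat.le_mul_of_pos_left (tt+1) (orderOf_pos (σ l))
              omega
            rw [← htt, ← Equiv.Perm.mul_apply, ← pow_add, Nat.sub_add_cancel h1,
              pow_mul, pow_orderOf_eq_one, one_pow]
            rfl
        set s0 := Nat.find hex with hs0def
        have hs0 := Nat.find_spec hex
        have key : ∀ j, j < s0 → ((σ l)^j) (σ m z) ∈ R := by
          intro j
          induction j with
          | zero => intro _; simpa using humR
          | succ j ih =>
            intro hj
            have hjlt : j < s0 := Nat.lt_of_succ_lt hj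
            have hxR := ih hjlt
            have h := hcl _ hxR l hlz
            have hstep : ((σ l)^(j+1)) (σ m z) = σ l (((σ l)^j) (σ m z)) := by
              rw [pow_succ']; rfl
            rcases h.2 with h' | h' | h'
            · rw [hstep]; exact h'
            · exfalso
              have : ((σ l)^j) (σ m z) = l := (σ l).injective (h'.trans (hfix l).symm)
              rw [this] at hxR
              exact hpR hxR
            · exfalso
              have hjz : ((σ l)^j) (σ m z) = z := (σ l).injective h'
              rcases Nat.eq_zero_or_pos j with rfl | hjpos
              · simp at hjz
                exact humz hjz
              · have : s0 ≤ j := Nat.find_le ⟨hjpos, hjz⟩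
                omega
        have hs1 : 1 ≤ s0 := hs0.1
        have hxR := key (s0 - 1) (by omega)
        have h := hcl _ hxR l hlz
        apply h.1
        have hstep : σ l (((σ l)^(s0-1)) (σ m z)) = ((σ l)^s0) (σ m z) := by
          rw [← Equiv.Perm.mul_apply, ← pow_succ']
          congr 2
          omega
        rw [hstep, hs0.2]
      obtain ⟨a, hap, haq, ha⟩ :=
        exists_perm_two_fixed σ z l (σ l z) hlz huql hlul hfix hnoR
      exact ⟨a, ⟨l, σ l z, hlul, hap, haq⟩, ha⟩
    · exfalso
      push_neg at hcase2a
      by_cases hall : ∀ l m, l ≠ z → m ≠ z → σ m z = σ l z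
      · obtain ⟨a', ha'⟩ : ∃ a' : Fin n, a' ≠ z := by
          obtain ⟨a', ha'mem⟩ := Finset.card_pos.mp (show 0 < ((univ : Finset (Fin n)).erase z).card by
            rw [Finset.card_erase_of_mem (Finset.mem_univ z), Finset.card_univ, Fintype.card_fin]
            omega)
          exact ⟨a', (Finset.mem_erase.mp ha'mem).1⟩
        have huz' : σ a' z ≠ z := huz a' ha'
        have hune : ∀ l, l ≠ z → σ a' z ≠ l := by
          intro l hl
          rw [hall l a' hl ha']
          exact hul_ne l hl
        exact hune (σ a' z) huz' rfl
      · push_neg at hall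
        obtain ⟨aa, bb, haaz, hbbz, hne⟩ := hall
        have h1 : σ bb z = aa := hcase2a aa bb haaz hbbz hne
        have h2 : σ aa z = bb := hcase2a bb aa hbbz haaz (Ne.symm hne)
        have haabb : aa ≠ bb := by
          intro h
          rw [h] at hne
          exact hne rfl
        obtain ⟨cc, hcc⟩ : ∃ cc : Fin n, cc ≠ z ∧ cc ≠ aa ∧ cc ≠ bb := by
          have hcard : 1 ≤ ((((univ : Finset (Fin n)).erase z).erase aa).erase bb).card := by
            have h1' := Finset.card_erase_le (s := ((univ : Finset (Fin n)).erase z).erase aa) (a := bb)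
            have h2' : (((univ : Finset (Fin n)).erase z).erase aa).card ≥ n - 2 := by
              have := Finset.card_erase_le (s := (univ : Finset (Fin n)).erase z) (a := aa)
              have h3' : ((univ : Finset (Fin n)).erase z).card = n - 1 := by
                rw [Finset.card_erase_of_mem (Finset.mem_univ z), Finset.card_univ, Fintype.card_fin]
              have h4' := Finset.card_erase_le (s := (univ : Finset (Fin n)).erase z) (a := aa)
              have h5' : (((univ : Finset (Fin n)).erase z).erase aa).card ≥ ((univ : Finset (Fin n)).erase z).card - 1 := Finset.pred_card_le_card_erase
              omega
            have h6' : ((((univ : Finset (Fin n)).erase z).erase aa).erase bb).card ≥ (((univ : Finset (Fin n)).erase z).erase aa).card - 1 := Finset.pred_card_le_card_erase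
            omega
          obtain ⟨cc, hccmem⟩ := Finset.card_pos.mp hcard
          have hc1 := Finset.mem_erase.mp hccmem
          have hc2 := Finset.mem_erase.mp hc1.2
          have hc3 := Finset.mem_erase.mp hc2.2
          exact ⟨cc, hc3.1, hc2.1, hc1.1⟩
        obtain ⟨hccz, hccaa, hccbb⟩ := hcc
        have h4 : σ cc z = bb := by
          by_contra hne'
          have : σ aa z ≠ σ cc z := by rw [h2]; exact fun h => hne' h.symm
          have := hcase2a cc aa hccz haaz this
          rw [h2] at this
          exact hccbb this.symm
        have h5 : σ bb z ≠ σ cc z := by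
          rw [h1, h4]
          exact haabb
        have := hcase2a cc bb hccz hbbz h5
        rw [h1] at this
        exact hccaa this.symm


/-- One allowed move: equal matrix sums, equal cardinality, and difference at most `n-1`. -/
def Rel (n : ℕ) (S T : Multiset (Equiv.Perm (Fin n))) : Prop :=
  Multiset.card S = Multiset.card T ∧
  (S.map (permMat n)).sum = (T.map (permMat n)).sum ∧
  Multiset.card (S - T) ≤ n - 1 ∧ Multiset.card (T - S) ≤ n - 1

def Connected (n : ℕ) : Multiset (Equiv.Perm (Fin n)) → Multiset (Equiv.Perm (Fin n)) → Prop :=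
  Relation.ReflTransGen (Rel n)

lemma Connected.sum_eq {S T : Multiset (Equiv.Perm (Fin n))} (h : Connected n S T) :
    (S.map (permMat n)).sum = (T.map (permMat n)).sum := by
  induction h with
  | refl => rfl
  | tail _ hrel ih => exact ih.trans hrel.2.1

lemma Connected.card_eq {S T : Multiset (Equiv.Perm (Fin n))} (h : Connected n S T) :
    Multiset.card S = Multiset.card T := by
  induction h with
  | refl => rfl
  | tail _ hrel ih => exact ih.trans hrel.1

lemma add_sub_add_left_ms {α : Type*} [DecidableEq α] (C A B : Multiset α) :
    (C + A) - (C + B) = A - B := by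
  ext a
  simp only [Multiset.count_sub, Multiset.count_add]
  omega

lemma finset_val_le {α : Type*} [DecidableEq α] {F : Finset α} {S : Multiset α}
    (h : ∀ x ∈ F, x ∈ S) : F.val ≤ S := by
  rw [Multiset.le_iff_count]
  intro a
  by_cases ha : a ∈ F
  · rw [Multiset.count_eq_one_of_mem F.nodup ha]
    exact Multiset.one_le_count_iff_mem.mpr (h a ha)
  · rw [Multiset.count_eq_zero_of_notMem ha]
    exact Nat.zero_le _

lemma rel_of_replace {S F A : Multiset (Equiv.Perm (Fin n))} (hF : F ≤ S)
    (hsum : (F.map (permMat n)).sum = (A.map (permMat n)).sum)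
    (hcard : Multiset.card F = Multiset.card A)
    (hle : Multiset.card F ≤ n - 1) :
    Rel n S (S - F + A) := by
  classical
  have hSplit : S - F + F = S := tsub_add_cancel_of_le hF
  refine ⟨?_, ?_, ?_, ?_⟩
  · have h1 := congrArg Multiset.card hSplit
    rw [Multiset.card_add] at h1
    rw [Multiset.card_add]
    omega
  · conv_lhs => rw [← hSplit]
    rw [Multiset.map_add, Multiset.sum_add, Multiset.map_add, Multiset.sum_add, hsum]
  · calc Multiset.card (S - (S - F + A)) = Multiset.card ((S - F + F) - (S - F + A)) := by rw [hSplit]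
    _ = Multiset.card (F - A) := by rw [add_sub_add_left_ms]
    _ ≤ Multiset.card F := Multiset.card_le_card (Multiset.sub_le_self F A)
    _ ≤ n - 1 := hle
  · calc Multiset.card ((S - F + A) - S) = Multiset.card ((S - F + A) - (S - F + F)) := by rw [hSplit]
    _ = Multiset.card (A - F) := by rw [add_sub_add_left_ms]
    _ ≤ Multiset.card A := Multiset.card_le_card (Multiset.sub_le_self A F)
    _ ≤ n - 1 := by omega

lemma good_move (hn : 4 ≤ n) {S : Multiset (Equiv.Perm (Fin n))}
    (hdiag : ∀ i, ∃ τ ∈ S, τ i = i) {σ₀ : Equiv.Perm (Fin n)} (hσ₀ : σ₀ ∈ S)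
    {p q : Fin n} (hpq : p ≠ q) (hp : σ₀ p = p) (hq : σ₀ q = q) :
    ∃ S', Connected n S S' ∧ (1 : Equiv.Perm (Fin n)) ∈ S' := by
  classical
  by_cases hone : (1 : Equiv.Perm (Fin n)) ∈ S
  · exact ⟨S, Relation.ReflTransGen.refl, hone⟩
  choose c hcmem hcfix using hdiag
  set F : Finset (Equiv.Perm (Fin n)) :=
    insert σ₀ ((univ.filter fun i => σ₀ i ≠ i).image c) with hFdef
  have hFS : ∀ x ∈ F, x ∈ S := by
    intro x hx
    rcases Finset.mem_insert.mp hx with rfl | hx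
    · exact hσ₀
    · obtain ⟨i, _, rfl⟩ := Finset.mem_image.mp hx
      exact hcmem i
  have hFpos : 0 < F.card := Finset.card_pos.mpr ⟨σ₀, Finset.mem_insert_self _ _⟩
  have hFcard : F.card ≤ n - 1 := by
    have h1 : (univ.filter fun i => σ₀ i ≠ i) ⊆ ((univ : Finset (Fin n)).erase p).erase q := by
      intro i hi
      have hi' := (Finset.mem_filter.mp hi).2
      refine Finset.mem_erase.mpr ⟨?_, Finset.mem_erase.mpr ⟨?_, Finset.mem_univ i⟩⟩
      · rintro rfl; exact hi' hq
      · rintro rfl; exact hi' hp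
    have h2 : (((univ : Finset (Fin n)).erase p).erase q).card = n - 2 := by
      rw [Finset.card_erase_of_mem (Finset.mem_erase.mpr ⟨hpq.symm, Finset.mem_univ q⟩),
        Finset.card_erase_of_mem (Finset.mem_univ p), Finset.card_univ, Fintype.card_fin]
      omega
    have h3 : (univ.filter fun i => σ₀ i ≠ i).card ≤ n - 2 := h2 ▸ Finset.card_le_card h1
    have h4 := Finset.card_image_le (s := univ.filter fun i => σ₀ i ≠ i) (f := c)
    have h5 := Finset.card_insert_le σ₀ ((univ.filter fun i => σ₀ i ≠ i).image c)
    rw [hFdef]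
    omega
  set N := ((F.val.map (permMat n)).sum) with hNdef
  have hrowN : ∀ i, ∑ j, N i j = F.card := by
    intro i; rw [hNdef, row_sum_sumPM]; rfl
  have hcolN : ∀ j, ∑ i, N i j = F.card := by
    intro j; rw [hNdef, col_sum_sumPM]; rfl
  have hdiagN : ∀ i, 0 < N i i := by
    intro i
    rw [hNdef, entry_pos_iff]
    by_cases hfix : σ₀ i = i
    · exact ⟨σ₀, (Finset.mem_insert_self _ _ : σ₀ ∈ F), hfix⟩
    · refine ⟨c i, ?_, hcfix i⟩
      exact Finset.mem_insert.mpr (Or.inr (Finset.mem_image.mpr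
        ⟨i, Finset.mem_filter.mpr ⟨Finset.mem_univ i, hfix⟩, rfl⟩))
  set M' : Matrix (Fin n) (Fin n) ℕ := Matrix.of fun i j => N i j - permMat n 1 i j with hM'def
  have hkey : ∀ i j, permMat n 1 i j + M' i j = N i j := by
    intro i j
    simp only [hM'def, Matrix.of_apply, permMat_apply, Equiv.Perm.one_apply]
    by_cases h : i = j
    · subst h
      have h2 := hdiagN i
      simp only [if_pos rfl, if_true]
      omega
    · simp [h]
  have hrowM' : ∀ i, ∑ j, M' i j = F.card - 1 := by
    intro i
    have h1 : ∑ j, (permMat n 1 i j + M' i j) = F.card := by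
      rw [Finset.sum_congr rfl fun j _ => hkey i j]; exact hrowN i
    rw [Finset.sum_add_distrib, row_sum_permMat] at h1
    omega
  have hcolM' : ∀ j, ∑ i, M' i j = F.card - 1 := by
    intro j
    have h1 : ∑ i, (permMat n 1 i j + M' i j) = F.card := by
      rw [Finset.sum_congr rfl fun i _ => hkey i j]; exact hcolN j
    rw [Finset.sum_add_distrib, col_sum_permMat] at h1
    omega
  obtain ⟨B, hBcard, hBsum⟩ := exists_decomp (F.card - 1) M' hrowM' hcolM'
  refine ⟨S - F.val + ((1 : Equiv.Perm (Fin n)) ::ₘ B), ?_, ?_⟩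
  · apply Relation.ReflTransGen.single
    apply rel_of_replace (finset_val_le hFS)
    · rw [Multiset.map_cons, Multiset.sum_cons, hBsum]
      ext i j
      rw [Matrix.add_apply]
      exact (hkey i j).symm ▸ rfl
    · simp [hBcard]
      omega
    · exact hFcard
  · exact Multiset.mem_add.mpr (Or.inr (Multiset.mem_cons_self _ _))


lemma insert_one (hn : 4 ≤ n) {S : Multiset (Equiv.Perm (Fin n))}
    (hdiag : ∀ i, ∃ τ ∈ S, τ i = i) :
    ∃ S', Connected n S S' ∧ (1 : Equiv.Perm (Fin n)) ∈ S' := by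
  classical
  by_cases htwo : ∃ σ₀ ∈ S, ∃ p q, p ≠ q ∧ σ₀ p = p ∧ σ₀ q = q
  · obtain ⟨σ₀, hσ₀, p, q, hpq, hp, hq⟩ := htwo
    exact good_move hn hdiag hσ₀ hpq hp hq
  · push_neg at htwo
    choose c hcmem hcfix using hdiag
    have hexact : ∀ l x, c l x = x → x = l := by
      intro l x hx
      by_contra hne
      exact htwo (c l) (hcmem l) x l hne hx (hcfix l)
    have hzpos : 0 < n := by omega
    set z : Fin n := ⟨0, hzpos⟩ with hzdef
    obtain ⟨a, ⟨p, q, hpq, hap, haq⟩, ha⟩ := bad_case_core hn c z hcfix hexact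
    have hcinj : Function.Injective c := by
      intro l m h
      have h1 : c m l = l := by rw [← h]; exact hcfix l
      exact (hexact m l h1).symm ▸ rfl
    set F : Finset (Equiv.Perm (Fin n)) := (univ.erase z).image c with hFdef
    have hFcard : F.card = n - 1 := by
      rw [hFdef, Finset.card_image_of_injective _ hcinj,
        Finset.card_erase_of_mem (Finset.mem_univ z), Finset.card_univ, Fintype.card_fin]
    have hFS : ∀ x ∈ F, x ∈ S := by
      intro x hx
      obtain ⟨l, _, rfl⟩ := Finset.mem_image.mp hx
      exact hcmem l
    set N := ((F.val.map (permMat n)).sum) with hNdef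
    have hrowN : ∀ i, ∑ j, N i j = n - 1 := by
      intro i; rw [hNdef, row_sum_sumPM]; rw [← hFcard]; rfl
    have hcolN : ∀ j, ∑ i, N i j = n - 1 := by
      intro j; rw [hNdef, col_sum_sumPM]; rw [← hFcard]; rfl
    have hposa : ∀ i, 0 < N i (a i) := by
      intro i
      rw [hNdef, entry_pos_iff]
      obtain ⟨l, hlz, hli⟩ := ha i
      exact ⟨c l, Finset.mem_image.mpr ⟨l, Finset.mem_erase.mpr ⟨hlz, Finset.mem_univ l⟩, rfl⟩, hli⟩
    set M' : Matrix (Fin n) (Fin n) ℕ := Matrix.of fun i j => N i j - permMat n a i j with hM'def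
    have hkey : ∀ i j, permMat n a i j + M' i j = N i j := by
      intro i j
      simp only [hM'def, Matrix.of_apply, permMat_apply]
      by_cases h : a i = j
      · subst h
        have h2 := hposa i
        simp only [if_pos rfl, if_true]
        omega
      · simp [h]
    have hrowM' : ∀ i, ∑ j, M' i j = n - 2 := by
      intro i
      have h1 : ∑ j, (permMat n a i j + M' i j) = n - 1 := by
        rw [Finset.sum_congr rfl fun j _ => hkey i j]; exact hrowN i
      rw [Finset.sum_add_distrib, row_sum_permMat] at h1
      omega
    have hcolM' : ∀ j, ∑ i, M' i j = n - 2 := by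
      intro j
      have h1 : ∑ i, (permMat n a i j + M' i j) = n - 1 := by
        rw [Finset.sum_congr rfl fun i _ => hkey i j]; exact hcolN j
      rw [Finset.sum_add_distrib, col_sum_permMat] at h1
      omega
    obtain ⟨B, hBcard, hBsum⟩ := exists_decomp (n - 2) M' hrowM' hcolM'
    set S' := S - F.val + (a ::ₘ B) with hS'def
    have hrel : Rel n S S' := by
      apply rel_of_replace (finset_val_le hFS)
      · rw [Multiset.map_cons, Multiset.sum_cons, hBsum]
        ext i j
        rw [Matrix.add_apply]
        exact (hkey i j).symm ▸ rfl
      · show Multiset.card F.val = _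
        rw [show Multiset.card F.val = F.card from rfl, hFcard]
        simp [hBcard]
        omega
      · rw [show Multiset.card F.val = F.card from rfl, hFcard]
    have haS' : a ∈ S' := Multiset.mem_add.mpr (Or.inr (Multiset.mem_cons_self _ _))
    have hdiag' : ∀ i, ∃ τ ∈ S', τ i = i := by
      intro i
      rw [← entry_pos_iff, ← hrel.2.1, entry_pos_iff]
      exact ⟨c i, hcmem i, hcfix i⟩
    obtain ⟨S'', hconn, hone⟩ := good_move hn hdiag' haS' hpq hap haq
    exact ⟨S'', Relation.ReflTransGen.head hrel hconn, hone⟩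


lemma sumPM_map_mul_apply (τ : Equiv.Perm (Fin n)) (A : Multiset (Equiv.Perm (Fin n))) (i j : Fin n) :
    ((A.map (fun x => τ * x)).map (permMat n)).sum i j = (A.map (permMat n)).sum i (τ⁻¹ j) := by
  rw [sumPM_apply, sumPM_apply, Multiset.map_map]
  congr 1
  apply Multiset.map_congr rfl
  intro σ _
  simp only [Function.comp_apply, permMat_apply, Equiv.Perm.mul_apply]
  congr 1
  simp only [eq_iff_iff]
  constructor
  · rintro rfl; simp
  · intro h; rw [h]; simp

lemma map_sub_of_bij (g : Equiv.Perm (Fin n) → Equiv.Perm (Fin n))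
    (hinj : Function.Injective g) (hsurj : Function.Surjective g)
    (A B : Multiset (Equiv.Perm (Fin n))) :
    (A.map g) - (B.map g) = (A - B).map g := by
  classical
  ext y
  obtain ⟨x, rfl⟩ := hsurj y
  rw [Multiset.count_sub, Multiset.count_map_eq_count' g _ hinj,
    Multiset.count_map_eq_count' g _ hinj, Multiset.count_map_eq_count' g _ hinj,
    Multiset.count_sub]

lemma rel_map_mul (τ : Equiv.Perm (Fin n)) {A B : Multiset (Equiv.Perm (Fin n))}
    (h : Rel n A B) : Rel n (A.map (fun x => τ * x)) (B.map (fun x => τ * x)) := by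
  have hinj : Function.Injective (fun x : Equiv.Perm (Fin n) => τ * x) :=
    fun x y hxy => by simpa using hxy
  have hsurj : Function.Surjective (fun x : Equiv.Perm (Fin n) => τ * x) :=
    fun y => ⟨τ⁻¹ * y, by simp [mul_assoc]⟩
  obtain ⟨hcard, hsum, h1, h2⟩ := h
  refine ⟨by simpa using hcard, ?_, ?_, ?_⟩
  · ext i j
    rw [sumPM_map_mul_apply, sumPM_map_mul_apply, hsum]
  · rw [map_sub_of_bij _ hinj hsurj, Multiset.card_map]
    exact h1
  · rw [map_sub_of_bij _ hinj hsurj, Multiset.card_map]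
    exact h2

lemma conn_map_mul (τ : Equiv.Perm (Fin n)) {A B : Multiset (Equiv.Perm (Fin n))}
    (h : Connected n A B) :
    Connected n (A.map (fun x => τ * x)) (B.map (fun x => τ * x)) :=
  Relation.ReflTransGen.lift (p := Rel n) (fun x : Multiset (Equiv.Perm (Fin n)) => x.map (fun y => τ * y)) (fun _ _ hr => rel_map_mul τ hr) _ _ h

lemma rel_cons_one {A B : Multiset (Equiv.Perm (Fin n))} (h : Rel n A B) :
    Rel n ((1 : Equiv.Perm (Fin n)) ::ₘ A) ((1 : Equiv.Perm (Fin n)) ::ₘ B) := by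
  classical
  obtain ⟨hcard, hsum, h1, h2⟩ := h
  have key : ∀ (A B : Multiset (Equiv.Perm (Fin n))),
      ((1:Equiv.Perm (Fin n)) ::ₘ A) - ((1:Equiv.Perm (Fin n)) ::ₘ B) = A - B := by
    intro A B
    ext a
    rw [Multiset.count_sub, Multiset.count_cons, Multiset.count_cons, Multiset.count_sub]
    by_cases h : a = 1
    · simp only [if_pos h]
      omega
    · simp only [if_neg h]
      omega
  refine ⟨by simpa using hcard, ?_, ?_, ?_⟩
  · simp only [Multiset.map_cons, Multiset.sum_cons, hsum]
  · rw [key]; exact h1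
  · rw [key]; exact h2

lemma conn_cons_one {A B : Multiset (Equiv.Perm (Fin n))} (h : Connected n A B) :
    Connected n ((1 : Equiv.Perm (Fin n)) ::ₘ A) ((1 : Equiv.Perm (Fin n)) ::ₘ B) :=
  Relation.ReflTransGen.lift (fun x => (1 : Equiv.Perm (Fin n)) ::ₘ x) (fun _ _ hr => rel_cons_one hr) _ _ h

lemma main_connected (hn : 4 ≤ n) : ∀ (k : ℕ) (S T : Multiset (Equiv.Perm (Fin n))),
    Multiset.card S = k → Multiset.card T = k →
    (S.map (permMat n)).sum = (T.map (permMat n)).sum → Connected n S T := by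
  intro k
  induction k using Nat.strong_induction_on with
  | _ k ih =>
    intro S T hS hT hsum
    by_cases hk : k ≤ n - 1
    · apply Relation.ReflTransGen.single
      refine ⟨hS.trans hT.symm, hsum, ?_, ?_⟩
      · calc Multiset.card (S - T) ≤ Multiset.card S :=
            Multiset.card_le_card (Multiset.sub_le_self S T)
        _ ≤ n - 1 := by omega
      · calc Multiset.card (T - S) ≤ Multiset.card T :=
            Multiset.card_le_card (Multiset.sub_le_self T S)
        _ ≤ n - 1 := by omega
    · have hTne : T ≠ 0 := by
        intro h
        rw [h] at hT
        simp at hT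
        omega
      obtain ⟨τ, hτ⟩ := Multiset.exists_mem_of_ne_zero hTne
      set g : Equiv.Perm (Fin n) → Equiv.Perm (Fin n) := fun x => τ⁻¹ * x with hgdef
      set S₁ := S.map g with hS₁def
      set T₁ := T.map g with hT₁def
      have h1T₁ : (1 : Equiv.Perm (Fin n)) ∈ T₁ :=
        Multiset.mem_map.mpr ⟨τ, hτ, by simp [hgdef]⟩
      have hsum₁ : (S₁.map (permMat n)).sum = (T₁.map (permMat n)).sum := by
        ext i j
        rw [hS₁def, hT₁def, sumPM_map_mul_apply, sumPM_map_mul_apply, hsum]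
      have hdiag₁ : ∀ i, ∃ τ' ∈ S₁, τ' i = i := by
        intro i
        apply (entry_pos_iff S₁ i i).mp
        rw [hsum₁]
        exact (entry_pos_iff T₁ i i).mpr ⟨1, h1T₁, rfl⟩
      obtain ⟨S₂, hconn₁₂, hone₂⟩ := insert_one hn hdiag₁
      have hsum₂ := hconn₁₂.sum_eq
      have hcard₂ := hconn₁₂.card_eq
      have hcard₁ : Multiset.card S₁ = k := by rw [hS₁def, Multiset.card_map, hS]
      have hcardT₁ : Multiset.card T₁ = k := by rw [hT₁def, Multiset.card_map, hT]
      have hS₂split : (1 : Equiv.Perm (Fin n)) ::ₘ S₂.erase 1 = S₂ := Multiset.cons_erase hone₂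
      have hT₁split : (1 : Equiv.Perm (Fin n)) ::ₘ T₁.erase 1 = T₁ := Multiset.cons_erase h1T₁
      have hsumE : ((S₂.erase 1).map (permMat n)).sum = ((T₁.erase 1).map (permMat n)).sum := by
        have e1 : permMat n 1 + ((S₂.erase 1).map (permMat n)).sum = (S₂.map (permMat n)).sum := by
          rw [← hS₂split, Multiset.map_cons, Multiset.sum_cons]
          rw [hS₂split]
        have e2 : permMat n 1 + ((T₁.erase 1).map (permMat n)).sum = (T₁.map (permMat n)).sum := by
          rw [← hT₁split, Multiset.map_cons, Multiset.sum_cons]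
          rw [hT₁split]
        have e3 : (S₂.map (permMat n)).sum = (T₁.map (permMat n)).sum := hsum₂.symm.trans hsum₁
        have h6 := e1.trans (e3.trans e2.symm)
        ext i j
        have h5 := congrArg (fun M => M i j) h6
        simp only [Matrix.add_apply] at h5
        omega
      have hcardES : Multiset.card (S₂.erase 1) = k - 1 := by
        rw [Multiset.card_erase_of_mem hone₂, ← hcard₂, hcard₁]
        rfl
      have hcardET : Multiset.card (T₁.erase 1) = k - 1 := by
        rw [Multiset.card_erase_of_mem h1T₁, hcardT₁]
        rfl
      have hk1 : k - 1 < k := by omega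
      have ihc := ih (k-1) hk1 _ _ hcardES hcardET hsumE
      have hconn₂T : Connected n S₂ T₁ := by
        rw [← hS₂split, ← hT₁split]
        exact conn_cons_one ihc
      have hconn₁T : Connected n S₁ T₁ := hconn₁₂.trans hconn₂T
      have hfinal := conn_map_mul τ hconn₁T
      have hSid : S₁.map (fun x => τ * x) = S := by
        rw [hS₁def, Multiset.map_map]
        have : ((fun x => τ * x) ∘ g) = id := by
          funext x
          simp [hgdef, ← mul_assoc]
        rw [this, Multiset.map_id]
      have hTid : T₁.map (fun x => τ * x) = T := by
        rw [hT₁def, Multiset.map_map]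
        have : ((fun x => τ * x) ∘ g) = id := by
          funext x
          simp [hgdef, ← mul_assoc]
        rw [this, Multiset.map_id]
      rwa [hSid, hTid] at hfinal

lemma connected_to_chain {S T : Multiset (Equiv.Perm (Fin n))} (h : Connected n S T) :
    ∃ (m : ℕ) (L : ℕ → Multiset (Equiv.Perm (Fin n))),
      L 0 = S ∧ L m = T ∧
      (∀ i ≤ m, ((L i).map (permMat n)).sum = (S.map (permMat n)).sum) ∧
      (∀ i < m, Multiset.card (L i - L (i + 1)) ≤ n - 1 ∧
        Multiset.card (L (i + 1) - L i) ≤ n - 1) := by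
  induction h with
  | refl =>
    exact ⟨0, fun _ => S, rfl, rfl, fun i _ => rfl, fun i hi => absurd hi (by omega)⟩
  | @tail b c hab hbc ih =>
    obtain ⟨m, L, hL0, hLm, hsums, hsteps⟩ := ih
    refine ⟨m+1, fun i => if i ≤ m then L i else c, ?_, ?_, ?_, ?_⟩
    · simp only [Nat.zero_le, if_pos]
      exact hL0
    · show (if m + 1 ≤ m then L (m+1) else c) = c
      rw [if_neg (by omega : ¬ m+1 ≤ m)]
    · intro i hi
      by_cases hle : i ≤ m
      · simp only [if_pos hle]
        exact hsums i hle
      · simp only [if_neg hle]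
        rw [← hbc.2.1, ← hLm]
        exact hsums m le_rfl
    · intro i hi
      by_cases hle : i + 1 ≤ m
      · have hle' : i ≤ m := by omega
        simp only [if_pos hle, if_pos hle']
        exact hsteps i (by omega)
      · have heq : i = m := by omega
        subst heq
        simp only [le_refl, if_pos, Nat.not_succ_le_self, if_neg]
        rw [hLm]
        exact ⟨hbc.2.2.1, hbc.2.2.2⟩

end PermMoves

/-- For `n > 3`, any two multisets of permutations of `{1, …, n}` with the same sum of
permutation matrices are connected by a sequence of multisets, all with that same sum of
permutation matrices, in which consecutive multisets differ (in each direction, counted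
with multiplicity) in at most `n - 1` elements. -/
theorem multisets_connected_by_moves_of_degree_le_sub_one
    (n : ℕ) (hn : 3 < n) (S T : Multiset (Equiv.Perm (Fin n)))
    (hcard : Multiset.card S = Multiset.card T)
    (hsum : (S.map (permMat n)).sum = (T.map (permMat n)).sum) :
    ∃ (m : ℕ) (L : ℕ → Multiset (Equiv.Perm (Fin n))),
      L 0 = S ∧ L m = T ∧
      (∀ i ≤ m, ((L i).map (permMat n)).sum = (S.map (permMat n)).sum) ∧
      (∀ i < m, Multiset.card (L i - L (i + 1)) ≤ n - 1 ∧
        Multiset.card (L (i + 1) - L i) ≤ n - 1) := by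
  have hn4 : 4 ≤ n := hn
  have hconn : PermMoves.Connected n S T :=
    PermMoves.main_connected hn4 (Multiset.card S) S T rfl hcard.symm hsum
  exact PermMoves.connected_to_chain hconn
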